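/- Let A, B, C be three affinely independent points in ℝ² such that the interior angle of the triangle at A is strictly greater than π/2, and let h = dist(A, line BC). Then every closed rectifiable curve in ℝ² whose image intersects each of the three lines through B and C, through C and A, and through A and B has length at least 2h. -/

import Mathlib

open Set Metric MeasureTheory Real EuclideanGeometry

local notation "⟪" x ", " y "⟫" => @inner ℝ _ _ x y


lemma key_real (h t r Bn Cn p d : ℝ) (hpos : 0 < h) (hBn : 0 ≤ Bn) (hCn : 0 ≤ Cn)
    (hp : p ≤ -(h*h)) (hcs : p*p ≤ Bn*Cn) (hd : 0 ≤ d)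
    (hd2 : t^2*Bn + r^2*Cn - 2*t*r*p + (t-r)^2*(h*h) ≤ d^2) :
    2*h ≤ d + h*|1-t| + h*|1-r| := by
  have am : 2*|t*r*p| ≤ t^2*Bn + r^2*Cn := by
    have h1 : (2*|t*r*p|)^2 ≤ (t^2*Bn + r^2*Cn)^2 := by
      rw [mul_pow, sq_abs]
      nlinarith [sq_nonneg (t^2*Bn - r^2*Cn), sq_nonneg (t*r), mul_nonneg hBn hCn,
        mul_nonneg (mul_nonneg (sq_nonneg (t*r)) hBn) hCn, sq_nonneg (t*r*p)]
    nlinarith [abs_nonneg (t*r*p), add_nonneg (mul_nonneg (sq_nonneg t) hBn) (mul_nonneg (sq_nonneg r) hCn)]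
  have key : (t+r)^2*(h*h) ≤ d^2 := by
    have h4 : 4*(h*h)*(t*r) ≤ t^2*Bn + r^2*Cn - 2*t*r*p := by
      rcases le_or_gt (t*r) 0 with htr | htr
      · have htrp : 0 ≤ t*r*p := by nlinarith [mul_nonneg (neg_nonneg.2 htr) (neg_nonneg.2 (show p ≤ 0 by nlinarith))]
        rw [abs_of_nonneg htrp] at am
        nlinarith [mul_nonpos_of_nonneg_of_nonpos (mul_nonneg hpos.le hpos.le) htr]
      · have htrp : t*r*p ≤ 0 := mul_nonpos_of_nonneg_of_nonpos htr.le (by nlinarith)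
        rw [abs_of_nonpos htrp] at am
        nlinarith [mul_le_mul_of_nonneg_left hp htr.le]
    nlinarith
  have hd3 : h*|t+r| ≤ d := by
    have h5 : (h*|t+r|)^2 ≤ d^2 := by rw [mul_pow, sq_abs]; nlinarith
    nlinarith [abs_nonneg (t+r), mul_nonneg hpos.le (abs_nonneg (t+r)), sq_nonneg (d - h*|t+r|)]
  have habs : 2 ≤ |t+r| + |1-t| + |1-r| := by
    rcases abs_cases (t+r) with ⟨e1,_⟩|⟨e1,_⟩ <;> rcases abs_cases (1-t) with ⟨e2,_⟩|⟨e2,_⟩ <;>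
      rcases abs_cases (1-r) with ⟨e3,_⟩|⟨e3,_⟩ <;> linarith
  nlinarith [abs_nonneg (1-t), abs_nonneg (1-r)]

set_option maxHeartbeats 1000000 in
lemma core_geom (A B C : EuclideanSpace ℝ (Fin 2)) (h : ℝ)
    (hind : AffineIndependent ℝ ![A, B, C])
    (hobtuse : π / 2 < ∠ B A C)
    (hh : h = infDist A (affineSpan ℝ ({B, C} : Set (EuclideanSpace ℝ (Fin 2))) :
      Set (EuclideanSpace ℝ (Fin 2))))
    (P Q R : EuclideanSpace ℝ (Fin 2))
    (hP : P ∈ affineSpan ℝ ({A, B} : Set (EuclideanSpace ℝ (Fin 2))))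
    (hQ : Q ∈ affineSpan ℝ ({C, A} : Set (EuclideanSpace ℝ (Fin 2))))
    (hR : R ∈ affineSpan ℝ ({B, C} : Set (EuclideanSpace ℝ (Fin 2)))) :
    2 * h ≤ dist P Q + dist Q R + dist R P := by
  haveI : Nonempty (affineSpan ℝ ({B, C} : Set (EuclideanSpace ℝ (Fin 2)))) :=
    ⟨⟨B, subset_affineSpan _ _ (by simp)⟩⟩
  set ℓ := affineSpan ℝ ({B, C} : Set (EuclideanSpace ℝ (Fin 2))) with hℓ
  set H : EuclideanSpace ℝ (Fin 2) := (EuclideanGeometry.orthogonalProjection ℓ A : EuclideanSpace ℝ (Fin 2)) with hH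
  -- A is not on line BC
  have hAnot : A ∉ ℓ := by
    intro hmem
    have hcol : Collinear ℝ ({A, B, C} : Set (EuclideanSpace ℝ (Fin 2))) :=
      collinear_insert_of_mem_affineSpan_pair hmem
    exact (affineIndependent_iff_not_collinear_set).mp hind hcol
  -- h = dist A H
  have hBmem : B ∈ ℓ := subset_affineSpan _ _ (by simp)
  have hCmem : C ∈ ℓ := subset_affineSpan _ _ (by simp)
  have hAH : h = dist A H := by
    rw [hh]
    apply le_antisymm
    · exact infDist_le_dist_of_mem (EuclideanGeometry.orthogonalProjection_mem A)
    · rw [infDist_eq_iInf]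
      haveI : Nonempty (ℓ : Set (EuclideanSpace ℝ (Fin 2))) := ⟨⟨H, EuclideanGeometry.orthogonalProjection_mem A⟩⟩
      apply le_ciInf
      rintro ⟨q, hq⟩
      have := EuclideanGeometry.dist_sq_eq_dist_orthogonalProjection_sq_add_dist_orthogonalProjection_sq (s := ℓ) (p₁ := q) A hq
      rw [dist_comm A q]
      nlinarith [dist_nonneg (x := q) (y := A), dist_nonneg (x := q) (y := H), dist_nonneg (x := A) (y := H)]
  have hpos : 0 < h := by
    rw [hAH]
    rcases (dist_nonneg (x := A) (y := H)).lt_or_eq with h' | h'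
    · exact h'
    · exact absurd ((EuclideanGeometry.dist_orthogonalProjection_eq_zero_iff (s := ℓ)).mp h'.symm) hAnot
  -- w = A - H, orthogonality facts
  set w : EuclideanSpace ℝ (Fin 2) := A - H with hw
  have hworth : ∀ x ∈ ℓ, ⟪x - H, w⟫ = 0 := by
    intro x hx
    have hd : x - H ∈ ℓ.direction := by
      have := AffineSubspace.vsub_mem_direction hx (EuclideanGeometry.orthogonalProjection_mem (s := ℓ) A)
      simpa [vsub_eq_sub] using this
    have hworth' : w ∈ ℓ.directionᗮ := by
      have := EuclideanGeometry.vsub_orthogonalProjection_mem_direction_orthogonal ℓ A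
      simpa [vsub_eq_sub] using this
    exact hworth' (x - H) hd
  have hww : ⟪w, w⟫ = h * h := by
    rw [real_inner_self_eq_norm_mul_norm]
    have : ‖w‖ = h := by rw [hAH, dist_eq_norm]
    rw [this]
  have hBw : ⟪B - H, w⟫ = 0 := hworth B hBmem
  have hCw : ⟪C - H, w⟫ = 0 := hworth C hCmem
  have hRw : ⟪R - H, w⟫ = 0 := hworth R hR
  -- parameters for P and Q
  obtain ⟨t, ht⟩ : ∃ t : ℝ, t • (B -ᵥ A) = P -ᵥ A := by
    have h1 := vadd_left_mem_affineSpan_pair (k := ℝ) (p₁ := A) (p₂ := B) (v := P -ᵥ A)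
    rw [vsub_vadd] at h1
    exact h1.mp hP
  obtain ⟨r, hr⟩ : ∃ r : ℝ, r • (C -ᵥ A) = Q -ᵥ A := by
    have h1 := vadd_right_mem_affineSpan_pair (k := ℝ) (p₁ := C) (p₂ := A) (v := Q -ᵥ A)
    rw [vsub_vadd] at h1
    exact h1.mp hQ
  rw [vsub_eq_sub, vsub_eq_sub] at ht hr
  -- obtuse angle gives negative inner product
  have hBA : B ≠ A := by
    intro hBA
    exact (hind.injective.ne (show (1 : Fin 3) ≠ 0 by decide)) (by simpa using hBA)
  have hCA : C ≠ A := by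
    intro hCA
    exact (hind.injective.ne (show (2 : Fin 3) ≠ 0 by decide)) (by simpa using hCA)
  have hinner : ⟪B - A, C - A⟫ < 0 := by
    have hcos : Real.cos (∠ B A C) < 0 :=
      Real.cos_neg_of_pi_div_two_lt_of_lt hobtuse
        (lt_of_le_of_lt (EuclideanGeometry.angle_le_pi _ _ _) (by linarith [Real.pi_pos]))
    have h2 := InnerProductGeometry.cos_angle_mul_norm_mul_norm (B -ᵥ A) (C -ᵥ A)
    rw [show InnerProductGeometry.angle (B -ᵥ A) (C -ᵥ A) = ∠ B A C from rfl] at h2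
    rw [vsub_eq_sub, vsub_eq_sub] at h2
    have hn1 : 0 < ‖B - A‖ := by simpa [sub_eq_zero] using hBA
    have hn2 : 0 < ‖C - A‖ := by simpa [sub_eq_zero] using hCA
    rw [← h2]
    exact mul_neg_of_neg_of_pos hcos (mul_pos hn1 hn2)
  -- decomposition facts
  have hBAd : B - A = (B - H) - w := by rw [hw]; abel
  have hCAd : C - A = (C - H) - w := by rw [hw]; abel
  set Bn := ⟪B - H, B - H⟫ with hBn
  set Cn := ⟪C - H, C - H⟫ with hCn
  set p := ⟪B - H, C - H⟫ with hp
  have hwB : ⟪w, B - H⟫ = 0 := by rw [real_inner_comm]; exact hBw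
  have hwC : ⟪w, C - H⟫ = 0 := by rw [real_inner_comm]; exact hCw
  have expand0 : ∀ b1 c1 w1 : EuclideanSpace ℝ (Fin 2), ⟪b1 - w1, c1 - w1⟫
      = ⟪b1, c1⟫ - ⟪b1, w1⟫ - ⟪w1, c1⟫ + ⟪w1, w1⟫ := by
    intro b1 c1 w1
    rw [inner_sub_left, inner_sub_right, inner_sub_right]; ring
  have hbb : ⟪B - A, B - A⟫ = Bn + h * h := by
    rw [hBAd, expand0, hBw, hwB, hww, ← hBn]; ring
  have hcc : ⟪C - A, C - A⟫ = Cn + h * h := by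
    rw [hCAd, expand0, hCw, hwC, hww, ← hCn]; ring
  have hbc : ⟪B - A, C - A⟫ = p + h * h := by
    rw [hBAd, hCAd, expand0, hBw, hwC, hww, ← hp]; ring
  have hpineq : p ≤ -(h * h) := by linarith [hbc ▸ hinner]
  have hcs : p * p ≤ Bn * Cn := by
    have := real_inner_mul_inner_self_le (B - H) (C - H)
    rw [← hBn, ← hCn, ← hp] at this
    linarith
  have hBnn : (0:ℝ) ≤ Bn := real_inner_self_nonneg
  have hCnn : (0:ℝ) ≤ Cn := real_inner_self_nonneg
  have hnw : ‖w‖ = h := by rw [hw, hAH, dist_eq_norm]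
  -- dist R P ≥ h * |1 - t|
  have hPR : h * |1 - t| ≤ dist R P := by
    have hdecomp : P - R = t • (B - A) + w - (R - H) := by rw [hw, ht]; abel
    have hPRw : ⟪P - R, w⟫ = h * h * (1 - t) := by
      rw [hdecomp, inner_sub_left, inner_add_left, real_inner_smul_left, hRw, hww, hBAd,
        inner_sub_left, hBw, hww]
      ring
    have habs := abs_real_inner_le_norm (P - R) w
    rw [hPRw, hnw, ← dist_eq_norm, dist_comm P R] at habs
    have he : |h * h * (1 - t)| = h * h * |1 - t| := by
      rw [abs_mul, abs_of_pos (mul_pos hpos hpos)]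
    rw [he] at habs
    have h2 : h * (h * |1 - t|) ≤ h * dist R P := by linear_combination habs
    exact le_of_mul_le_mul_left h2 hpos
  -- dist Q R ≥ h * |1 - r|
  have hQR : h * |1 - r| ≤ dist Q R := by
    have hdecomp : Q - R = r • (C - A) + w - (R - H) := by rw [hw, hr]; abel
    have hQRw : ⟪Q - R, w⟫ = h * h * (1 - r) := by
      rw [hdecomp, inner_sub_left, inner_add_left, real_inner_smul_left, hRw, hww, hCAd,
        inner_sub_left, hCw, hww]
      ring
    have habs := abs_real_inner_le_norm (Q - R) w
    rw [hQRw, hnw, ← dist_eq_norm] at habs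
    have he : |h * h * (1 - r)| = h * h * |1 - r| := by
      rw [abs_mul, abs_of_pos (mul_pos hpos hpos)]
    rw [he] at habs
    have h2 : h * (h * |1 - r|) ≤ h * dist Q R := by linear_combination habs
    exact le_of_mul_le_mul_left h2 hpos
  -- dist P Q squared
  have hPQ2 : t^2*Bn + r^2*Cn - 2*t*r*p + (t-r)^2*(h*h) ≤ (dist P Q)^2 := by
    have hdecomp : P - Q = t • (B - A) - r • (C - A) := by rw [ht, hr]; abel
    have expand2 : ∀ (x y : EuclideanSpace ℝ (Fin 2)) (a b : ℝ),
        ‖a • x - b • y‖^2 = a^2*⟪x,x⟫ + b^2*⟪y,y⟫ - 2*a*b*⟪x,y⟫ := by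
      intro x y a b
      rw [← real_inner_self_eq_norm_sq]
      simp only [inner_sub_left, inner_sub_right, real_inner_smul_left, real_inner_smul_right,
        real_inner_comm x y]
      ring
    have heq : (dist P Q)^2 = t^2*Bn + r^2*Cn - 2*t*r*p + (t-r)^2*(h*h) := by
      rw [dist_eq_norm, hdecomp, expand2, hbb, hcc, hbc]
      ring
    linarith
  -- apply the key real inequality
  have := key_real h t r Bn Cn p (dist P Q) hpos hBnn hCnn hpineq hcs dist_nonneg hPQ2
  linarith

lemma tour_le (γ : ℝ → EuclideanSpace ℝ (Fin 2)) (hclosed : γ 0 = γ 1)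
    {x y z : ℝ} (hx : x ∈ Icc (0:ℝ) 1) (hy : y ∈ Icc (0:ℝ) 1) (hz : z ∈ Icc (0:ℝ) 1)
    (hxy : x ≤ y) (hyz : y ≤ z) :
    ENNReal.ofReal (dist (γ x) (γ y) + dist (γ y) (γ z) + dist (γ z) (γ x))
      ≤ eVariationOn γ (Icc 0 1) := by
  classical
  set u : ℕ → ℝ := fun n => if n = 0 then 0 else if n = 1 then x else if n = 2 then y
    else if n = 3 then z else 1 with hu
  have hmono : Monotone u := by
    apply monotone_nat_of_le_succ
    intro n
    rcases n with _|_|_|_|n <;> simp [hu] <;> first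
      | exact hx.1 | exact hxy | exact hyz | exact hz.2
  have hus : ∀ i, u i ∈ Icc (0:ℝ) 1 := by
    intro i
    rcases i with _|_|_|_|i <;>
      simp [hu, left_mem_Icc, right_mem_Icc, hx, hy, hz, zero_le_one]
  have hsum := eVariationOn.sum_le (f := γ) (n := 4) hmono hus
  have hexp : (∑ i ∈ Finset.range 4, edist (γ (u (i + 1))) (γ (u i)))
      = edist (γ x) (γ 0) + edist (γ y) (γ x) + edist (γ z) (γ y) + edist (γ 1) (γ z) := by
    simp [Finset.sum_range_succ, hu]
  rw [hexp] at hsum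
  refine le_trans ?_ hsum
  rw [edist_dist, edist_dist, edist_dist, edist_dist,
    ← ENNReal.ofReal_add (dist_nonneg) (dist_nonneg),
    ← ENNReal.ofReal_add (add_nonneg dist_nonneg dist_nonneg) (dist_nonneg),
    ← ENNReal.ofReal_add (add_nonneg (add_nonneg dist_nonneg dist_nonneg) dist_nonneg) (dist_nonneg)]
  apply ENNReal.ofReal_le_ofReal
  have t1 : dist (γ z) (γ x) ≤ dist (γ z) (γ 1) + dist (γ 0) (γ x) := by
    rw [← hclosed]; exact dist_triangle _ _ _
  have := dist_comm (γ x) (γ 0)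
  have := dist_comm (γ z) (γ 1)
  have := dist_comm (γ y) (γ x)
  have := dist_comm (γ z) (γ y)
  linarith

/-- For an obtuse triangle (obtuse at `A`), every closed rectifiable curve visiting the
three side lines has length at least `2h`, where `h` is the altitude from `A`. -/
theorem stmt_12 (A B C : EuclideanSpace ℝ (Fin 2)) (h : ℝ)
    (hind : AffineIndependent ℝ ![A, B, C])
    (hobtuse : π / 2 < ∠ B A C)
    (hh : h = infDist A (affineSpan ℝ ({B, C} : Set (EuclideanSpace ℝ (Fin 2))) :
      Set (EuclideanSpace ℝ (Fin 2))))
    (γ : ℝ → EuclideanSpace ℝ (Fin 2))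
    (hcont : ContinuousOn γ (Icc 0 1))
    (hclosed : γ 0 = γ 1)
    (hBC : ((γ '' Icc 0 1) ∩
      (affineSpan ℝ ({B, C} : Set (EuclideanSpace ℝ (Fin 2))) :
        Set (EuclideanSpace ℝ (Fin 2)))).Nonempty)
    (hCA : ((γ '' Icc 0 1) ∩
      (affineSpan ℝ ({C, A} : Set (EuclideanSpace ℝ (Fin 2))) :
        Set (EuclideanSpace ℝ (Fin 2)))).Nonempty)
    (hAB : ((γ '' Icc 0 1) ∩
      (affineSpan ℝ ({A, B} : Set (EuclideanSpace ℝ (Fin 2))) :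
        Set (EuclideanSpace ℝ (Fin 2)))).Nonempty) :
    ENNReal.ofReal (2 * h) ≤ eVariationOn γ (Icc 0 1) := by
  obtain ⟨x1, ⟨a, haI, rfl⟩, haL⟩ := hBC
  obtain ⟨x2, ⟨b2, hbI, rfl⟩, hbL⟩ := hCA
  obtain ⟨x3, ⟨c2, hcI, rfl⟩, hcL⟩ := hAB
  have hcore := core_geom A B C h hind hobtuse hh (γ c2) (γ b2) (γ a) hcL hbL haL
  have perim : ∀ x y z : ℝ, x ∈ Icc (0:ℝ) 1 → y ∈ Icc (0:ℝ) 1 → z ∈ Icc (0:ℝ) 1 →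
      x ≤ y → y ≤ z →
      2 * h ≤ dist (γ x) (γ y) + dist (γ y) (γ z) + dist (γ z) (γ x) →
      ENNReal.ofReal (2 * h) ≤ eVariationOn γ (Icc 0 1) := fun x y z hx hy hz hxy hyz hle =>
    le_trans (ENNReal.ofReal_le_ofReal hle) (tour_le γ hclosed hx hy hz hxy hyz)
  have d1 := dist_comm (γ a) (γ b2)
  have d2 := dist_comm (γ b2) (γ c2)
  have d3 := dist_comm (γ a) (γ c2)
  rcases le_total a b2 with h1 | h1 <;> rcases le_total b2 c2 with h2 | h2 <;>
    rcases le_total a c2 with h3 | h3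
  · exact perim a b2 c2 haI hbI hcI h1 h2 (by linarith)
  · exact perim a b2 c2 haI hbI hcI h1 h2 (by linarith)
  · exact perim a c2 b2 haI hcI hbI h3 h2 (by linarith)
  · exact perim c2 a b2 hcI haI hbI h3 h1 (by linarith)
  · exact perim b2 a c2 hbI haI hcI h1 h3 (by linarith)
  · exact perim b2 c2 a hbI hcI haI h2 h3 (by linarith)
  · exact perim c2 b2 a hcI hbI haI h2 h1 (by linarith)
  · exact perim c2 b2 a hcI hbI haI h2 h1 (by linarith)
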